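/- Let (M,g) be a complete Riemannian manifold, L smooth with |∇L(y)| ≤ K/d(y,O)^α for all y, where O ∈ M, K ≥ 0, 0 ≤ α < 1. Then for all y, z ∈ M, |L(y) - L(z)| ≤ (2K/(1-α))·d(y,z)^{1-α}. -/

import Mathlib

open MeasureTheory intervalIntegral Set

lemma Fint {α : ℝ} (hα1 : α < 1) (a b : ℝ) :
    IntervalIntegrable (fun u : ℝ => |u| ^ (-α)) volume a b := by
  have key : ∀ c : ℝ, 0 ≤ c →
      IntervalIntegrable (fun u : ℝ => |u| ^ (-α)) volume 0 c := by
    intro c hc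
    have h0 : IntervalIntegrable (fun u : ℝ => u ^ (-α)) volume 0 c :=
      intervalIntegrable_rpow' (by linarith)
    rw [intervalIntegrable_iff_integrableOn_Ioc_of_le hc] at h0 ⊢
    exact h0.congr_fun (fun u hu => by rw [abs_of_nonneg hu.1.le]) measurableSet_Ioc
  have key2 : ∀ c : ℝ, IntervalIntegrable (fun u : ℝ => |u| ^ (-α)) volume 0 c := by
    intro c
    rcases le_total 0 c with hc | hc
    · exact key c hc
    · have h1 := (IntervalIntegrable.iff_comp_neg enorm_ne_top).mp (key (-c) (by linarith))
      simpa [abs_neg] using h1.symm.symm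
  exact (key2 a).symm.trans (key2 b)

lemma Fval {α : ℝ} (hα1 : α < 1) {s : ℝ} (hs : 0 ≤ s) :
    ∫ u in (0:ℝ)..s, |u| ^ (-α) = s ^ (1 - α) / (1 - α) := by
  have h1 : (∫ u in (0:ℝ)..s, |u| ^ (-α)) = ∫ u in (0:ℝ)..s, u ^ (-α) := by
    apply intervalIntegral.integral_congr
    intro u hu
    rw [Set.uIcc_of_le hs] at hu
    show |u| ^ (-α) = u ^ (-α); rw [abs_of_nonneg hu.1]
  rw [h1, integral_rpow (Or.inl (by linarith))]
  rw [Real.zero_rpow (by linarith : -α + 1 ≠ 0), sub_zero,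
    show -α + 1 = 1 - α by ring]

lemma Fvalneg {α : ℝ} (hα1 : α < 1) {s : ℝ} (hs : 0 ≤ s) :
    ∫ u in (-s)..(0:ℝ), |u| ^ (-α) = s ^ (1 - α) / (1 - α) := by
  have h := intervalIntegral.integral_comp_neg (a := (0:ℝ)) (b := s)
    (fun u : ℝ => |u| ^ (-α))
  simp only [abs_neg, neg_zero] at h
  rw [← h, Fval hα1 hs]

lemma Fbound {α : ℝ} (hα0 : 0 ≤ α) (hα1 : α < 1) {c d : ℝ} (hc : c ≤ 0) (hd : 0 ≤ d) :
    ∫ u in c..(c + d), |u| ^ (-α) ≤ 2 * (d ^ (1 - α) / (1 - α)) := by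
  have h1α : 0 < 1 - α := by linarith
  have hnn : 0 ≤ d ^ (1 - α) / (1 - α) :=
    div_nonneg (Real.rpow_nonneg hd _) h1α.le
  rcases le_or_gt (c + d) 0 with h | h
  · -- interval entirely nonpositive: shift comparison
    have shift : (∫ u in (-d)..(0:ℝ), |u + (c + d)| ^ (-α))
        = ∫ u in c..(c + d), |u| ^ (-α) := by
      have h2 := intervalIntegral.integral_comp_add_right (a := -d) (b := 0)
        (fun u : ℝ => |u| ^ (-α)) (c + d)
      rw [show -d + (c + d) = c by ring, zero_add] at h2
      exact h2
    have int1 : IntervalIntegrable (fun u : ℝ => |u + (c + d)| ^ (-α)) volume (-d) 0 := by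
      have h3 := (Fint hα1 c (c + d)).comp_add_right (c + d)
      rw [show c - (c + d) = -d by ring, sub_self] at h3
      exact h3
    have mono : (∫ u in (-d)..(0:ℝ), |u + (c + d)| ^ (-α))
        ≤ ∫ u in (-d)..(0:ℝ), |u| ^ (-α) := by
      apply intervalIntegral.integral_mono_ae_restrict (by linarith) int1 (Fint hα1 _ _)
      have hne : ∀ᵐ u : ℝ ∂(volume.restrict (Set.Icc (-d) 0)), u ≠ 0 := by
        apply ae_restrict_of_ae
        rw [MeasureTheory.ae_iff]
        simp [not_not]
      filter_upwards [hne, ae_restrict_mem measurableSet_Icc] with u hu hmem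
      have hu0 : 0 < |u| := abs_pos.2 hu
      have hle : |u| ≤ |u + (c + d)| := by
        rw [abs_of_nonpos hmem.2, abs_of_nonpos (by linarith [hmem.2] : u + (c + d) ≤ 0)]
        linarith
      exact Real.rpow_le_rpow_of_nonpos hu0 hle (by linarith)
    calc ∫ u in c..(c + d), |u| ^ (-α)
        = ∫ u in (-d)..(0:ℝ), |u + (c + d)| ^ (-α) := shift.symm
      _ ≤ ∫ u in (-d)..(0:ℝ), |u| ^ (-α) := mono
      _ = d ^ (1 - α) / (1 - α) := Fvalneg hα1 hd
      _ ≤ 2 * (d ^ (1 - α) / (1 - α)) := by linarith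
  · -- 0 is inside: compare with [-d, d]
    have h2 : -d ≤ c := by linarith
    have h3 : c + d ≤ d := by linarith
    have mono : (∫ u in c..(c + d), |u| ^ (-α)) ≤ ∫ u in (-d)..d, |u| ^ (-α) := by
      apply intervalIntegral.integral_mono_interval h2 (by linarith : c ≤ c + d) h3
      · exact Filter.Eventually.of_forall fun u => Real.rpow_nonneg (abs_nonneg u) _
      · exact Fint hα1 _ _
    have split : (∫ u in (-d)..d, |u| ^ (-α)) = 2 * (d ^ (1 - α) / (1 - α)) := by
      rw [← intervalIntegral.integral_add_adjacent_intervals (Fint hα1 (-d) 0) (Fint hα1 0 d),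
        Fvalneg hα1 hd, Fval hα1 hd]
      ring
    linarith

/-- Hölder estimate (2.54): on a complete Riemannian manifold (modelled here as
a metric space in which any two points are joined by a unit-speed minimal
geodesic), if `|∇L| ≤ K/d(·,O)^α` along geodesics (i.e. the derivative of `L`
along any unit-speed minimal geodesic `γ` satisfies
`|(L∘γ)'(t)| ≤ K/d(γ(t),O)^α`), with `K ≥ 0`, `0 ≤ α < 1`, then
`|L(y) - L(z)| ≤ (2K/(1-α))·d(y,z)^{1-α}` for all `y, z`. -/
theorem stmt_12 {M : Type*} [MetricSpace M] (O : M) (L : M → ℝ) (K α : ℝ)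
    (hK : 0 ≤ K) (hα0 : 0 ≤ α) (hα1 : α < 1)
    (hgeo : ∀ y z : M, ∃ γ : ℝ → M, γ 0 = y ∧ γ (dist y z) = z ∧
      (∀ a ∈ Set.Icc (0 : ℝ) (dist y z), ∀ b ∈ Set.Icc (0 : ℝ) (dist y z),
        dist (γ a) (γ b) = |a - b|) ∧
      (∀ t ∈ Set.Icc (0 : ℝ) (dist y z), DifferentiableAt ℝ (L ∘ γ) t ∧
        |deriv (L ∘ γ) t| ≤ K / dist (γ t) O ^ α)) :
    ∀ y z : M, |L y - L z| ≤ (2 * K / (1 - α)) * dist y z ^ (1 - α) := by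
  intro y z
  obtain ⟨γ, hy, hz, hiso, hD⟩ := hgeo y z
  set d : ℝ := dist y z with hdd
  have hd0 : 0 ≤ d := dist_nonneg
  have h1α : 0 < 1 - α := by linarith
  set r : ℝ := dist y O with hrr
  set f : ℝ → ℝ := L ∘ γ with hf
  set g : ℝ → ℝ := deriv f with hg
  set h : ℝ → ℝ := fun t => K * |t - r| ^ (-α) with hh
  -- integrability of the bound
  have hint : IntervalIntegrable h volume 0 d := by
    have h1 := (Fint hα1 (-r) (d - r)).comp_sub_right r
    rw [show -r + r = 0 by ring, show d - r + r = d by ring] at h1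
    exact h1.const_mul K
  -- pointwise derivative bound away from t = r
  have hbound : ∀ t ∈ Set.Icc 0 d, t ≠ r → |g t| ≤ h t := by
    intro t ht htr
    obtain ⟨hdiff, hder⟩ := hD t ht
    have hdist : |r - t| ≤ dist (γ t) O := by
      have e1 : dist (γ 0) (γ t) = |0 - t| :=
        hiso 0 (Set.left_mem_Icc.2 hd0) t ht
      have e1' : dist (γ 0) (γ t) = t := by
        rw [e1, zero_sub, abs_neg, abs_of_nonneg ht.1]
      have tri1 : dist (γ 0) O ≤ dist (γ 0) (γ t) + dist (γ t) O := dist_triangle _ _ _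
      have tri2 : dist (γ 0) (γ t) ≤ dist (γ 0) O + dist O (γ t) := dist_triangle _ _ _
      have hr0 : dist (γ 0) O = r := by rw [hy]
      rw [dist_comm O (γ t)] at tri2
      rw [abs_sub_le_iff]
      constructor <;> linarith [e1', hr0, tri1, tri2]
    have hm : 0 < |r - t| := abs_pos.2 (sub_ne_zero.2 (Ne.symm htr))
    calc |g t| ≤ K / dist (γ t) O ^ α := hder
      _ ≤ K / |r - t| ^ α := by
          gcongr
      _ = h t := by
          show K / |r - t| ^ α = K * |t - r| ^ (-α)
          rw [abs_sub_comm, Real.rpow_neg (abs_nonneg _), div_eq_mul_inv]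
  -- a.e. statements
  have haene : ∀ᵐ t : ℝ, t ≠ r := by
    rw [MeasureTheory.ae_iff]; simp [not_not]
  have hh_nonneg : ∀ t, 0 ≤ h t := fun t =>
    mul_nonneg hK (Real.rpow_nonneg (abs_nonneg _) _)
  -- integrability of g
  have hgint : IntervalIntegrable g volume 0 d := by
    rw [intervalIntegrable_iff_integrableOn_Ioc_of_le hd0] at hint ⊢
    apply MeasureTheory.Integrable.mono hint ((measurable_deriv f).aestronglyMeasurable)
    filter_upwards [haene.filter_mono (ae_mono Measure.restrict_le_self),
      ae_restrict_mem measurableSet_Ioc] with t htne htmem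
    rw [Real.norm_eq_abs, Real.norm_eq_abs, abs_of_nonneg (hh_nonneg t)]
    exact hbound t (Set.Ioc_subset_Icc_self htmem) htne
  -- FTC
  have hderivs : ∀ t ∈ Set.uIcc (0:ℝ) d, HasDerivAt f (g t) t := by
    intro t ht
    rw [Set.uIcc_of_le hd0] at ht
    exact (hD t ht).1.hasDerivAt
  have ftc : (∫ t in (0:ℝ)..d, g t) = f d - f 0 :=
    intervalIntegral.integral_eq_sub_of_hasDerivAt hderivs hgint
  -- chain of inequalities
  have step1 : |L y - L z| = |∫ t in (0:ℝ)..d, g t| := by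
    rw [ftc, ← hy, ← hz]
    show |f 0 - f d| = |f d - f 0|
    rw [abs_sub_comm]
  have step2 : |∫ t in (0:ℝ)..d, g t| ≤ ∫ t in (0:ℝ)..d, |g t| :=
    intervalIntegral.abs_integral_le_integral_abs hd0
  have step3 : (∫ t in (0:ℝ)..d, |g t|) ≤ ∫ t in (0:ℝ)..d, h t := by
    apply intervalIntegral.integral_mono_ae_restrict hd0 hgint.abs hint
    filter_upwards [haene.filter_mono (ae_mono Measure.restrict_le_self),
      ae_restrict_mem measurableSet_Icc] with t htne htmem
    exact hbound t htmem htne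
  have step4 : (∫ t in (0:ℝ)..d, h t) ≤ K * (2 * (d ^ (1 - α) / (1 - α))) := by
    rw [hh]
    rw [intervalIntegral.integral_const_mul]
    apply mul_le_mul_of_nonneg_left _ hK
    have hsub := intervalIntegral.integral_comp_sub_right (a := (0:ℝ)) (b := d)
      (fun u : ℝ => |u| ^ (-α)) r
    rw [hsub, zero_sub]
    have := Fbound hα0 hα1 (c := -r) (d := d) (by simp [hrr]) hd0
    rw [show -r + d = d - r by ring] at this
    exact this
  have final : K * (2 * (d ^ (1 - α) / (1 - α))) = 2 * K / (1 - α) * d ^ (1 - α) := by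
    ring
  calc |L y - L z| = |∫ t in (0:ℝ)..d, g t| := step1
    _ ≤ ∫ t in (0:ℝ)..d, |g t| := step2
    _ ≤ ∫ t in (0:ℝ)..d, h t := step3
    _ ≤ K * (2 * (d ^ (1 - α) / (1 - α))) := step4
    _ = 2 * K / (1 - α) * d ^ (1 - α) := final
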